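/- Every model comes from a path through the behaviour graph: let S be a finite set of SNF clauses and σ a model of S. Then there is an infinite sequence N_0, N_1, N_2, … of nodes of the behaviour graph of S, with N_0 an initial node and an edge from N_i to N_{i+1} for every i, such that for every i ∈ ℕ the set of proposition symbols made true by the valuation component of N_i equals σ(i) restricted to the proposition symbols occurring in S. -/
import Mathlib


/-- A literal over proposition symbols `P`: a proposition symbol (`pos = true`)
or a negated proposition symbol (`pos = false`). -/
structure Lit (P : Type) where
  pos : Bool
  sym : P

/-- The complement of a literal. -/
def Lit.negate {P : Type} (l : Lit P) : Lit P := ⟨!l.pos, l.sym⟩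

/-- A literal holds in model `σ` at index `i`. -/
def Lit.holds {P : Type} (σ : ℕ → Set P) (i : ℕ) (l : Lit P) : Prop :=
  if l.pos then l.sym ∈ σ i else l.sym ∉ σ i

/-- A conjunction of literals holds (the empty conjunction is the constant `true`). -/
def conjHolds {P : Type} (σ : ℕ → Set P) (i : ℕ) (L : List (Lit P)) : Prop :=
  ∀ l ∈ L, Lit.holds σ i l

/-- A disjunction of literals holds. -/
def disjHolds {P : Type} (σ : ℕ → Set P) (i : ℕ) (L : List (Lit P)) : Prop :=
  ∃ l ∈ L, Lit.holds σ i l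

/-- SNF clauses: initial clauses `start ⇒ ⋁ rhs`, step clauses `⋀ lhs ⇒ ◯⋁ rhs`
(an empty `lhs` is the constant `true`), and sometime clauses `⋀ lhs ⇒ ◇ev`. -/
inductive SNF (P : Type) : Type
  | initial (rhs : List (Lit P))
  | step (lhs rhs : List (Lit P))
  | sometime (lhs : List (Lit P)) (ev : Lit P)

/-- Satisfaction of an SNF clause in model `σ` at index `i`. -/
def SNF.holds {P : Type} (σ : ℕ → Set P) (i : ℕ) : SNF P → Prop
  | .initial rhs => i = 0 → disjHolds σ i rhs
  | .step lhs rhs => conjHolds σ i lhs → disjHolds σ (i + 1) rhs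
  | .sometime lhs ev => conjHolds σ i lhs → ∃ k, i ≤ k ∧ Lit.holds σ k ev

/-- `σ` is a model of the clause set `S`, i.e. `(σ,0) ⊨ □⋀_{A ∈ S} A`. -/
def IsModel {P : Type} (σ : ℕ → Set P) (S : Set (SNF P)) : Prop :=
  ∀ (i : ℕ), ∀ c ∈ S, SNF.holds σ i c

/-- The proposition symbols occurring in an SNF clause. -/
def SNF.syms {P : Type} : SNF P → Set P
  | .initial rhs => {p | ∃ l ∈ rhs, Lit.sym l = p}
  | .step lhs rhs => {p | ∃ l ∈ lhs ++ rhs, Lit.sym l = p}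
  | .sometime lhs ev => {p | ∃ l ∈ ev :: lhs, Lit.sym l = p}

/-- The proposition symbols occurring in a clause set. -/
def symsOf {P : Type} (S : Set (SNF P)) : Set P := ⋃ c ∈ S, c.syms

/-- The literals occurring as eventualities (◇l on the right-hand side of
sometime clauses) in `S`. -/
def evLits {P : Type} (S : Set (SNF P)) : Set (Lit P) :=
  {l | ∃ lhs, SNF.sometime lhs l ∈ S}

/-- The positive literal on symbol `p`. -/
def posLit {P : Type} (p : P) : Lit P := ⟨true, p⟩

/-- The augmented clause set `Aug(S)`, where `w l` is the fresh symbol `w_l`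
for each eventuality literal `l` of `S`: adds `w_l ⇒ ◯(l ∨ w_l)` and, for each
sometime clause `C ⇒ ◇l` of `S`, `start ⇒ (¬C ∨ l ∨ w_l)` and `true ⇒ ◯(¬C ∨ l ∨ w_l)`. -/
def Aug {P : Type} (S : Set (SNF P)) (w : Lit P → P) : Set (SNF P) :=
  S ∪ {c | ∃ l ∈ evLits S, c = SNF.step [posLit (w l)] [l, posLit (w l)]}
    ∪ {c | ∃ lhs l, SNF.sometime lhs l ∈ S ∧
          c = SNF.initial (lhs.map Lit.negate ++ [l, posLit (w l)])}
    ∪ {c | ∃ lhs l, SNF.sometime lhs l ∈ S ∧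
          c = SNF.step [] (lhs.map Lit.negate ++ [l, posLit (w l)])}

/-- The symbols `w_l` are fresh: none occurs in `S`, and distinct eventuality
literals receive distinct fresh symbols. -/
def FreshW {P : Type} (S : Set (SNF P)) (w : Lit P → P) : Prop :=
  (∀ l ∈ evLits S, ∀ c ∈ S, w l ∉ SNF.syms c) ∧ Set.InjOn w (evLits S)

/-- A normal model of `Aug(S)`: a model of `Aug(S)` which moreover satisfies
`□(w_l ⇔ (¬l ∧ ◇l))` for each eventuality literal `l` of `S`. -/
def NormalModel {P : Type} (σ : ℕ → Set P) (S : Set (SNF P)) (w : Lit P → P) : Prop :=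
  IsModel σ (Aug S w) ∧
  ∀ (i : ℕ), ∀ l ∈ evLits S,
    (w l ∈ σ i ↔ (¬ Lit.holds σ i l ∧ ∃ k, i ≤ k ∧ Lit.holds σ k l))

/-- A node of the behaviour graph: a valuation `V` (the set of proposition symbols of
`S` made true) together with a set `E` of outstanding eventuality literals. -/
abbrev BNode (P : Type) := Set P × Set (Lit P)

/-- A literal is satisfied by a valuation. -/
def litSatV {P : Type} (V : Set P) (l : Lit P) : Prop :=
  if l.pos then l.sym ∈ V else l.sym ∉ V

/-- A conjunction of literals is satisfied by a valuation (empty = `true`). -/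
def conjSatV {P : Type} (V : Set P) (L : List (Lit P)) : Prop := ∀ l ∈ L, litSatV V l

/-- A disjunction of literals is satisfied by a valuation. -/
def disjSatV {P : Type} (V : Set P) (L : List (Lit P)) : Prop := ∃ l ∈ L, litSatV V l

/-- The eventuality literals of the sometime clauses of `S` fired by valuation `V`. -/
def evSet {P : Type} (S : Set (SNF P)) (V : Set P) : Set (Lit P) :=
  {l | ∃ lhs, SNF.sometime lhs l ∈ S ∧ conjSatV V lhs}

/-- The edge relation of the behaviour graph of `S`: there is an edge from `(V,E)` to
`(V', E' ∪ E″)` whenever `V'` is a valuation over the symbols of `S` satisfying the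
right-hand side of every step clause fired by `V`, where `E'` consists of the elements
of `E` not satisfied by `V` and `E″ = evSet S V'`. -/
def bgEdge {P : Type} (S : Set (SNF P)) (n m : BNode P) : Prop :=
  m.1 ⊆ symsOf S ∧
  (∀ lhs rhs, SNF.step lhs rhs ∈ S → conjSatV n.1 lhs → disjSatV m.1 rhs) ∧
  m.2 = {l ∈ n.2 | ¬ litSatV n.1 l} ∪ evSet S m.1

/-- The initial nodes of the behaviour graph of `S`. -/
def bgInitial {P : Type} (S : Set (SNF P)) (n : BNode P) : Prop :=
  n.1 ⊆ symsOf S ∧ (∀ rhs, SNF.initial rhs ∈ S → disjSatV n.1 rhs) ∧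
  n.2 = evSet S n.1

/-- A node is in the behaviour graph of `S` iff it is reachable from an initial node. -/
def inBG {P : Type} (S : Set (SNF P)) (n : BNode P) : Prop :=
  ∃ n₀, bgInitial S n₀ ∧ Relation.ReflTransGen (bgEdge S) n₀ n

/-- A set `K` of nodes which survives the deletion rules: all its members are nodes of
the behaviour graph, every member has a successor in `K`, and for every member and
every outstanding eventuality `l` of that member, some node of `K` whose valuation
satisfies `l` is reachable from it inside `K`. -/
def goodSet {P : Type} (S : Set (SNF P)) (K : Set (BNode P)) : Prop :=
  (∀ n ∈ K, inBG S n) ∧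
  (∀ n ∈ K, ∃ m ∈ K, bgEdge S n m) ∧
  (∀ n ∈ K, ∀ l ∈ n.2,
    ∃ m ∈ K, Relation.ReflTransGen (fun a b => a ∈ K ∧ b ∈ K ∧ bgEdge S a b) n m ∧
      litSatV m.1 l)

/-- The reduced behaviour graph of `S`: the set of nodes surviving exhaustive
application of the deletion rules, i.e. the largest set closed under the two
survival conditions. -/
def reducedBG {P : Type} (S : Set (SNF P)) : Set (BNode P) :=
  ⋃₀ {K | goodSet S K}

/-- every model of `S` arises from a path through the behaviour graph:
there is an infinite path starting at an initial node, going along edges, whose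
valuation components agree with `σ` on the proposition symbols of `S`. -/
lemma litSat_iff {P : Type} (S : Set (SNF P)) (σ : ℕ → Set P) (i : ℕ) (l : Lit P)
    (h : l.sym ∈ symsOf S) : litSatV (σ i ∩ symsOf S) l ↔ Lit.holds σ i l := by
  unfold litSatV Lit.holds
  by_cases hp : l.pos <;> simp [hp, Set.mem_inter_iff, h]

lemma sym_mem_symsOf {P : Type} {S : Set (SNF P)} {c : SNF P} (hc : c ∈ S)
    {l : Lit P} (hl : l.sym ∈ c.syms) : l.sym ∈ symsOf S :=
  Set.mem_biUnion hc hl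

theorem stmt_11 {P : Type} [Countable P] (S : Set (SNF P)) (hS : S.Finite)
    (σ : ℕ → Set P) (hσ : IsModel σ S) :
    ∃ N : ℕ → BNode P,
      bgInitial S (N 0) ∧
      (∀ i : ℕ, bgEdge S (N i) (N (i + 1))) ∧
      (∀ i : ℕ, inBG S (N i)) ∧
      (∀ i : ℕ, (N i).1 = σ i ∩ symsOf S) := by
  classical
  set V : ℕ → Set P := fun i => σ i ∩ symsOf S with hV
  -- transfer lemmas
  have hsat : ∀ i (l : Lit P), l.sym ∈ symsOf S → (litSatV (V i) l ↔ Lit.holds σ i l) := by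
    intro i l h
    exact litSat_iff S σ i l h
  have hinit : ∀ rhs, SNF.initial rhs ∈ S → disjSatV (V 0) rhs := by
    intro rhs hc
    obtain ⟨l, hl, hh⟩ := hσ 0 _ hc rfl
    exact ⟨l, hl, (hsat 0 l (sym_mem_symsOf hc ⟨l, hl, rfl⟩)).2 hh⟩
  have hstep : ∀ i lhs rhs, SNF.step lhs rhs ∈ S → conjSatV (V i) lhs →
      disjSatV (V (i + 1)) rhs := by
    intro i lhs rhs hc hconj
    have hc' : conjHolds σ i lhs := by
      intro l hl
      exact (hsat i l (sym_mem_symsOf hc ⟨l, List.mem_append_left _ hl, rfl⟩)).1 (hconj l hl)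
    obtain ⟨l, hl, hh⟩ := hσ i _ hc hc'
    exact ⟨l, hl, (hsat (i+1) l (sym_mem_symsOf hc ⟨l, List.mem_append_right _ hl, rfl⟩)).2 hh⟩
  -- eventuality sets
  let E : ℕ → Set (Lit P) := fun n =>
    Nat.rec (evSet S (V 0))
      (fun i Ei => {l ∈ Ei | ¬ litSatV (V i) l} ∪ evSet S (V (i + 1))) n
  refine ⟨fun i => (V i, E i), ?_, ?_, ?_, fun i => rfl⟩
  · exact ⟨Set.inter_subset_right, hinit, rfl⟩
  · intro i
    exact ⟨Set.inter_subset_right, hstep i, rfl⟩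
  · intro i
    induction i with
    | zero => exact ⟨(V 0, E 0), ⟨Set.inter_subset_right, hinit, rfl⟩, .refl⟩
    | succ n ih =>
      obtain ⟨n₀, h₀, hr⟩ := ih
      exact ⟨n₀, h₀, hr.tail ⟨Set.inter_subset_right, hstep n, rfl⟩⟩
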